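/- Let F : ℂⁿ → ℂ be the evaluation map of a multivariate polynomial with complex coefficients of total degree D, let ẑ ∈ ℂⁿ and δ > 0. If |F(ẑ)| − Σ_{k=1}^{D} (‖DᵏF(ẑ)‖/k!)·δᵏ > 0, then F(z) ≠ 0 for every z ∈ ℂⁿ with ‖z − ẑ‖ < δ. (Proposition: Taylor-residual exclusion test.) -/

import Mathlib

open MvPolynomial

section Aux

variable {E : Type*} [NormedAddCommGroup E] [NormedSpace ℂ E]

/-- The diagonal of a continuous `d`-multilinear map has a finite power series of order `d+1`
at the origin. -/
lemma diag_hasFiniteFPowerSeriesOnBall {d : ℕ}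
    (M : ContinuousMultilinearMap ℂ (fun _ : Fin d => E) ℂ) :
    ∃ q : FormalMultilinearSeries ℂ E ℂ,
      HasFiniteFPowerSeriesOnBall (fun z => M (fun _ => z)) q 0 (d + 1) ⊤ := by
  classical
  refine ⟨fun k => if h : d = k then M.domDomCongr (finCongr h) else 0, ?_⟩
  apply HasFiniteFPowerSeriesOnBall.mk'
  · intro m hm
    exact dif_neg (by omega)
  · exact ENNReal.zero_lt_top
  · intro y _
    rw [Finset.sum_eq_single_of_mem d (Finset.self_mem_range_succ _)]
    · rw [dif_pos rfl, zero_add]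
      rfl
    · intro m _ ne
      rw [dif_neg (Ne.symm ne)]
      rfl

/-- A finite sum of functions each having a finite power series of order `N` at `0`
has a finite power series of order `N` at `0`. -/
lemma sum_hasFiniteFPowerSeriesOnBall {ι : Type*} (s : Finset ι) (f : ι → E → ℂ) (N : ℕ)
    (h : ∀ i ∈ s, ∃ q : FormalMultilinearSeries ℂ E ℂ,
      HasFiniteFPowerSeriesOnBall (f i) q 0 N ⊤) :
    ∃ q : FormalMultilinearSeries ℂ E ℂ,
      HasFiniteFPowerSeriesOnBall (fun z => ∑ i ∈ s, f i z) q 0 N ⊤ := by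
  classical
  induction s using Finset.cons_induction with
  | empty =>
    refine ⟨0, HasFiniteFPowerSeriesOnBall.mk' (fun m _ => rfl) ENNReal.zero_lt_top
      fun y _ => by simp⟩
  | cons a s ha ih =>
    obtain ⟨qa, hqa⟩ := h a (Finset.mem_cons_self _ _)
    obtain ⟨qs, hqs⟩ := ih fun i hi => h i (Finset.mem_cons_of_mem hi)
    refine ⟨qa + qs, ?_⟩
    have := hqa.add hqs
    have heq : (f a + fun z => ∑ i ∈ s, f i z) = fun z => ∑ i ∈ Finset.cons a s ha, f i z := by
      funext z
      rw [Finset.sum_cons]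
      rfl
    rw [heq, sup_idem] at this
    exact this

end Aux

/-- A monomial function on Euclidean space has a finite power series of order degree + 1. -/
lemma monomial_hasFiniteFPowerSeriesOnBall (n : ℕ) (m : Fin n →₀ ℕ) (c : ℂ) :
    ∃ q : FormalMultilinearSeries ℂ (EuclideanSpace ℂ (Fin n)) ℂ,
      HasFiniteFPowerSeriesOnBall
        (fun z : EuclideanSpace ℂ (Fin n) => c * m.prod fun i k => z i ^ k) q 0
        ((m.sum fun _ k => k) + 1) ⊤ := by
  classical
  set L : List (Fin n) := m.toMultiset.toList with hL
  have hlen : L.length = m.sum fun _ k => k := by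
    rw [hL, Multiset.length_toList, Finsupp.card_toMultiset]
    rfl
  set M : ContinuousMultilinearMap ℂ (fun _ : Fin L.length => EuclideanSpace ℂ (Fin n)) ℂ :=
    c • (ContinuousMultilinearMap.mkPiAlgebra ℂ (Fin L.length) ℂ).compContinuousLinearMap
      (fun j => EuclideanSpace.proj (L.get j)) with hM
  have hdiag : ∀ z : EuclideanSpace ℂ (Fin n),
      M (fun _ => z) = c * m.prod fun i k => z i ^ k := by
    intro z
    have h1 : M (fun _ => z) = c * ∏ j : Fin L.length, z (L.get j) := by
      simp [hM, ContinuousMultilinearMap.smul_apply]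
    rw [h1]
    congr 1
    calc ∏ j : Fin L.length, z (L.get j)
        = (List.ofFn fun j => z (L.get j)).prod := List.prod_ofFn.symm
      _ = (L.map z).prod := by simp only [List.get_eq_getElem, List.ofFn_getElem_eq_map]
      _ = (m.toMultiset.map z).prod := by
            have hcoe : ((L.map z : List ℂ) : Multiset ℂ) = m.toMultiset.map z := by
              rw [← Multiset.map_coe, hL, Multiset.coe_toList]
            rw [← Multiset.prod_coe (L.map z), hcoe]
      _ = (Finsupp.toMultiset (m.mapDomain z)).prod := by rw [Finsupp.toMultiset_map]
      _ = (m.mapDomain z).prod fun a k => a ^ k := Finsupp.prod_toMultiset _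
      _ = m.prod fun i k => z i ^ k :=
            Finsupp.prod_mapDomain_index (by simp) (fun _ _ _ => pow_add _ _ _)
  obtain ⟨q, hq⟩ := diag_hasFiniteFPowerSeriesOnBall M
  have heq : (fun z => M (fun _ => z)) =
      fun z : EuclideanSpace ℂ (Fin n) => c * m.prod fun i k => z i ^ k := funext hdiag
  rw [heq] at hq
  rw [hlen] at hq
  exact ⟨q, hq⟩

/-- Evaluation of a multivariate polynomial of total degree at most `N` has a finite power
series of order `N+1` at the origin. -/
lemma mvPolynomial_hasFiniteFPowerSeriesOnBall (n N : ℕ) (p : MvPolynomial (Fin n) ℂ)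
    (hp : p.totalDegree ≤ N) :
    ∃ q : FormalMultilinearSeries ℂ (EuclideanSpace ℂ (Fin n)) ℂ,
      HasFiniteFPowerSeriesOnBall
        (fun z : EuclideanSpace ℂ (Fin n) => MvPolynomial.eval (fun i => z i) p) q 0 (N + 1) ⊤ := by
  classical
  have heq : (fun z : EuclideanSpace ℂ (Fin n) => MvPolynomial.eval (fun i => z i) p) =
      fun z : EuclideanSpace ℂ (Fin n) =>
        ∑ m ∈ p.support, coeff m p * m.prod fun i k => z i ^ k := by
    funext z
    conv_lhs => rw [p.as_sum]
    rw [map_sum]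
    exact Finset.sum_congr rfl fun m _ => eval_monomial
  rw [heq]
  apply sum_hasFiniteFPowerSeriesOnBall
  intro m hm
  obtain ⟨q, hq⟩ := monomial_hasFiniteFPowerSeriesOnBall n m (coeff m p)
  refine ⟨q, ⟨hq.toHasFPowerSeriesOnBall, fun k hk => hq.finite k ?_⟩⟩
  have := MvPolynomial.le_totalDegree hm
  omega

lemma eval_shift (n : ℕ) (p : MvPolynomial (Fin n) ℂ) (y a : Fin n → ℂ) :
    MvPolynomial.eval y (MvPolynomial.aeval (fun i => X i + C (a i)) p) =
      MvPolynomial.eval (fun i => y i + a i) p := by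
  induction p using MvPolynomial.induction_on with
  | C c => simp
  | add p q hp hq => simp only [map_add, hp, hq]
  | mul_X p i hp => simp only [map_mul, aeval_X, map_add, eval_X, eval_C, eval_add, hp]

lemma totalDegree_shift (n : ℕ) (p : MvPolynomial (Fin n) ℂ) (a : Fin n → ℂ) :
    (MvPolynomial.aeval (fun i => X i + C (a i)) p).totalDegree ≤ p.totalDegree := by
  classical
  have h : MvPolynomial.aeval (fun i => X i + C (a i)) p =
      ∑ m ∈ p.support, MvPolynomial.aeval (fun i => X i + C (a i)) (monomial m (coeff m p)) := by
    conv_lhs => rw [p.as_sum]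
    rw [map_sum]
  rw [h]
  refine le_trans (totalDegree_finset_sum _ _) (Finset.sup_le fun m hm =>
    le_trans ?_ (MvPolynomial.le_totalDegree hm))
  rw [aeval_monomial]
  refine le_trans (totalDegree_mul _ _) ?_
  have h0 : (algebraMap ℂ (MvPolynomial (Fin n) ℂ) (coeff m p)).totalDegree = 0 := by
    rw [MvPolynomial.algebraMap_eq]; exact totalDegree_C _
  rw [h0, zero_add]
  refine le_trans (totalDegree_finset_prod _ _) ?_
  have : ∀ i ∈ m.support, ((X i + C (a i) : MvPolynomial (Fin n) ℂ) ^ m i).totalDegree ≤ m i := by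
    intro i _
    refine le_trans (totalDegree_pow _ _) ?_
    have h1 : (X i + C (a i) : MvPolynomial (Fin n) ℂ).totalDegree ≤ 1 :=
      le_trans (totalDegree_add _ _) (max_le (le_of_eq (totalDegree_X _))
        (by simp [totalDegree_C]))
    calc m i * (X i + C (a i) : MvPolynomial (Fin n) ℂ).totalDegree ≤ m i * 1 :=
          Nat.mul_le_mul_left _ h1
      _ = m i := Nat.mul_one _
  exact le_trans (Finset.sum_le_sum this) (le_of_eq rfl)

/-- **Taylor-residual exclusion test.**
If `F` is the evaluation map of a multivariate polynomial of total degree `D`,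
and the Taylor residual of `F` at `zhat` with radius `δ` is positive, then `F`
does not vanish on the open ball of radius `δ` about `zhat`. -/
theorem taylor_residual_exclusion (n : ℕ) (p : MvPolynomial (Fin n) ℂ)
    (F : EuclideanSpace ℂ (Fin n) → ℂ)
    (hF : ∀ z : EuclideanSpace ℂ (Fin n), F z = MvPolynomial.eval (fun i => z i) p)
    (D : ℕ) (hD : p.totalDegree = D)
    (zhat : EuclideanSpace ℂ (Fin n)) (δ : ℝ) (hδ : 0 < δ)
    (hres : 0 < ‖F zhat‖ -
      ∑ k ∈ Finset.Icc 1 D, (‖iteratedFDeriv ℂ k F zhat‖ / (k.factorial : ℝ)) * δ ^ k) :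
    ∀ z : EuclideanSpace ℂ (Fin n), ‖z - zhat‖ < δ → F z ≠ 0 := by
  classical
  -- Build a finite power series for F centered at zhat.
  set P : MvPolynomial (Fin n) ℂ := MvPolynomial.aeval (fun i => X i + C (zhat i)) p with hP
  have hdeg : P.totalDegree ≤ D := le_trans (totalDegree_shift n p (fun i => zhat i)) (le_of_eq hD)
  obtain ⟨q, hq0⟩ := mvPolynomial_hasFiniteFPowerSeriesOnBall n D P hdeg
  have hq : HasFiniteFPowerSeriesOnBall F q zhat (D + 1) ⊤ := by
    have h2 := hq0.comp_sub zhat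
    rw [zero_add] at h2
    refine h2.congr fun w _ => ?_
    show MvPolynomial.eval (fun i => (w - zhat) i) P = F w
    rw [hP, eval_shift, hF w]
    have harg : (fun i => (w - zhat) i + zhat i) = fun i => w i := by
      funext i
      simp [PiLp.sub_apply]
    rw [harg]
  -- Identify the series coefficients with iterated derivatives on the diagonal.
  have hdiag : ∀ (k : ℕ) (y : EuclideanSpace ℂ (Fin n)),
      (k.factorial : ℝ) * ‖q k fun _ => y‖ =
        ‖iteratedFDeriv ℂ k F zhat fun _ => y‖ := by
    intro k y
    have := hq.toHasFPowerSeriesOnBall.factorial_smul y k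
    rw [← this]
    rw [nsmul_eq_mul]
    rw [norm_mul, Complex.norm_natCast]
  intro z hz hzero
  set y : EuclideanSpace ℂ (Fin n) := z - zhat with hy
  -- F z equals the partial sum.
  have hsum : F z = ∑ k ∈ Finset.range (D + 1), q k fun _ => y := by
    have := hq.eq_partialSum (z - zhat)
      (by rw [Metric.emetric_ball_top]; exact Set.mem_univ _) (D + 1) le_rfl
    rw [show zhat + (z - zhat) = z by abel] at this
    exact this
  have hq0val : ‖q 0 fun _ => y‖ = ‖F zhat‖ := by
    have h := hdiag 0 y
    simp only [Nat.factorial_zero, Nat.cast_one, one_mul] at h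
    rw [h, iteratedFDeriv_zero_apply]
  have hrange : Finset.range (D + 1) = insert 0 (Finset.Icc 1 D) := by
    ext k
    simp [Nat.lt_succ_iff]
    omega
  have hbound : ∀ k ∈ Finset.Icc 1 D, ‖q k fun _ => y‖ ≤
      ‖iteratedFDeriv ℂ k F zhat‖ / (k.factorial : ℝ) * δ ^ k := by
    intro k _
    have hfac : (0 : ℝ) < (k.factorial : ℝ) := by positivity
    have h1 : ‖iteratedFDeriv ℂ k F zhat fun _ => y‖ ≤
        ‖iteratedFDeriv ℂ k F zhat‖ * ‖y‖ ^ k := by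
      have := (iteratedFDeriv ℂ k F zhat).le_opNorm fun _ => y
      simpa [Finset.prod_const] using this
    have h2 : ‖y‖ ^ k ≤ δ ^ k := pow_le_pow_left₀ (norm_nonneg _) (le_of_lt hz) k
    have h3 : (k.factorial : ℝ) * ‖q k fun _ => y‖ ≤
        ‖iteratedFDeriv ℂ k F zhat‖ * δ ^ k := by
      rw [hdiag k y]
      exact le_trans h1 (mul_le_mul_of_nonneg_left h2 (norm_nonneg _))
    rw [div_mul_eq_mul_div, le_div_iff₀ hfac]
    calc ‖q k fun _ => y‖ * (k.factorial : ℝ)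
        = (k.factorial : ℝ) * ‖q k fun _ => y‖ := mul_comm _ _
      _ ≤ ‖iteratedFDeriv ℂ k F zhat‖ * δ ^ k := h3
  -- Put everything together.
  have h0notin : (0 : ℕ) ∉ Finset.Icc 1 D := by simp
  have hzero' : (0 : ℝ) = ‖F z‖ := by rw [hzero]; simp
  have hlow : ‖F zhat‖ -
      ∑ k ∈ Finset.Icc 1 D, (‖iteratedFDeriv ℂ k F zhat‖ / (k.factorial : ℝ)) * δ ^ k ≤
      ‖F z‖ := by
    rw [hsum, hrange, Finset.sum_insert h0notin]
    have htri : ‖(q 0 fun _ => y) + ∑ k ∈ Finset.Icc 1 D, q k fun _ => y‖ ≥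
        ‖q 0 fun _ => y‖ - ‖∑ k ∈ Finset.Icc 1 D, q k fun _ => y‖ := by
      set A := (q 0 fun _ => y) with hA
      set B := ∑ k ∈ Finset.Icc 1 D, (q k fun _ => y) with hB
      have h1 : ‖A‖ ≤ ‖A + B‖ + ‖B‖ := by
        calc ‖A‖ = ‖(A + B) + (-B)‖ := by ring_nf
          _ ≤ ‖A + B‖ + ‖-B‖ := norm_add_le _ _
          _ = ‖A + B‖ + ‖B‖ := by rw [norm_neg]
      linarith
    refine le_trans ?_ htri
    rw [hq0val]
    have hsum_le : ‖∑ k ∈ Finset.Icc 1 D, q k fun _ => y‖ ≤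
        ∑ k ∈ Finset.Icc 1 D, (‖iteratedFDeriv ℂ k F zhat‖ / (k.factorial : ℝ)) * δ ^ k :=
      le_trans (norm_sum_le _ _) (Finset.sum_le_sum hbound)
    linarith
  rw [← hzero'] at hlow
  linarith
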